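/- arXiv:1004.4634 — 3 statements merged into one kernel-verified Lean document; each statement's English description precedes it below -/
import Mathlib

section
/- For any associative algebra A over ℂ, the characters (traces) of pairwise nonisomorphic irreducible finite-dimensional representations of A induce linearly independent linear functionals on the quotient A/[A,A]. -/
set_option linter.unusedSectionVars false


lemma schur_scalar {A : Type*} [Ring A] [Algebra ℂ A] {V : Type*} [AddCommGroup V]
    [Module ℂ V] [Module A V] [IsScalarTower ℂ A V] [SMulCommClass A ℂ V]
    [FiniteDimensional ℂ V] [IsSimpleModule A V] (f : V →ₗ[A] V) :
    ∃ c : ℂ, ∀ v, f v = c • v := by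
  haveI : Nontrivial V := IsSimpleModule.nontrivial A V
  let f' : Module.End ℂ V :=
    { toFun := f
      map_add' := f.map_add
      map_smul' := fun c v => by
        simp only [RingHom.id_apply]
        rw [← algebraMap_smul A c v, f.map_smul, algebraMap_smul] }
  obtain ⟨c, hc⟩ := Module.End.exists_eigenvalue f'
  obtain ⟨v₀, hv₀⟩ := hc.exists_hasEigenvector
  refine ⟨c, fun v => ?_⟩
  let g : V →ₗ[A] V :=
    { toFun := fun v => f v - c • v
      map_add' := fun x y => by simp [smul_add]; abel
      map_smul' := fun a x => by
        simp only [RingHom.id_apply, f.map_smul, smul_sub]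
        rw [smul_comm c a x] }
  have hg : g = 0 := by
    rcases g.injective_or_eq_zero with h | h
    · exfalso
      have h0 : g v₀ = 0 := by
        have := hv₀.apply_eq_smul
        simp only [g, LinearMap.coe_mk, AddHom.coe_mk]
        rw [show f v₀ = f' v₀ from rfl, this, sub_self]
      exact hv₀.right (h (by rw [h0, map_zero]))
    · exact h
  have := LinearMap.congr_fun hg v
  simpa [g, sub_eq_zero] using this

section
variable {A : Type*} [Ring A] [Algebra ℂ A] {n : ℕ}
    (V : Fin n → Type*) [∀ i, AddCommGroup (V i)] [∀ i, Module ℂ (V i)]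
    [∀ i, Module A (V i)] [∀ i, IsScalarTower ℂ A (V i)]
    [∀ i, SMulCommClass A ℂ (V i)]
    [∀ i, FiniteDimensional ℂ (V i)]

lemma exists_trace_element
    (hsimple : ∀ i, IsSimpleModule A (V i))
    (hnoniso : ∀ i j, i ≠ j → IsEmpty (V i ≃ₗ[A] V j)) (j : Fin n) :
    ∃ a : A,
      LinearMap.trace ℂ (V j) (DistribMulAction.toLinearMap ℂ (V j) a) =
        (Module.finrank ℂ (V j) : ℂ) ∧
      ∀ i, i ≠ j → LinearMap.trace ℂ (V i) (DistribMulAction.toLinearMap ℂ (V i) a) = 0 := by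
  classical
  haveI hnt : ∀ i, Nontrivial (V i) := fun i => IsSimpleModule.nontrivial A (V i)
  set d : Fin n → ℕ := fun i => Module.finrank ℂ (V i) with hd
  set κ := (Σ i : Fin n, Fin (d i)) with hκ
  set Vf : κ → Type _ := fun p => V p.1 with hVf
  set b : ∀ i, Module.Basis (Fin (d i)) ℂ (V i) := fun i => Module.finBasis ℂ (V i) with hb
  set B : ∀ p : κ, Vf p := fun p => b p.1 p.2 with hB
  let μ : A →ₗ[A] (∀ p : κ, Vf p) :=
    { toFun := fun a => fun p => a • B p
      map_add' := fun x y => funext fun p => add_smul x y (B p)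
      map_smul' := fun a x => funext fun p => mul_smul a x (B p) }
  haveI hsimp' : ∀ p : κ, IsSimpleModule A (Vf p) := fun p => hsimple p.1
  haveI : IsSemisimpleModule A (∀ p : κ, Vf p) := by
    refine isSemisimpleModule_of_isSemisimpleModule_submodule'
      (p := fun p : κ => LinearMap.range (LinearMap.single A Vf p)) (fun p => ?_)
      (LinearMap.iSup_range_single A Vf)
    haveI : IsSimpleModule A (LinearMap.range (LinearMap.single A Vf p)) :=
      IsSimpleModule.congr
        (LinearEquiv.ofInjective _ (Pi.single_injective (M := Vf) p)).symm
    infer_instance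
  -- surjectivity of μ
  have hsurj : Function.Surjective μ := by
    rw [← LinearMap.range_eq_top]
    by_contra hN
    set N := LinearMap.range μ with hNdef
    obtain ⟨N', hNN'⟩ := exists_isCompl N
    have hN'ne : N' ≠ ⊥ := by
      intro h
      apply hN
      have := codisjoint_iff.mp hNN'.codisjoint
      rwa [h, sup_bot_eq] at this
    obtain ⟨S, hSN', hSsimple⟩ :=
      (IsSemisimpleModule.eq_bot_or_exists_simple_le N').resolve_left hN'ne
    haveI := hSsimple
    haveI : Nontrivial S := IsSimpleModule.nontrivial A S
    -- a nonzero coordinate map on S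
    have hex : ∃ p : κ, (LinearMap.proj p (R := A) (φ := Vf)).comp S.subtype ≠ 0 := by
      by_contra hall
      push_neg at hall
      obtain ⟨s, hs⟩ := exists_ne (0 : S)
      apply hs
      ext1
      funext p
      exact LinearMap.congr_fun (hall p) s
    obtain ⟨p₀, hp₀⟩ := hex
    set m := p₀.1 with hm
    let e : S ≃ₗ[A] V m :=
      LinearEquiv.ofBijective _ (LinearMap.bijective_of_ne_zero hp₀)
    -- a complement of S containing N
    obtain ⟨U, hU⟩ := exists_isCompl (S ⊔ N)
    have hST : IsCompl S (U ⊔ N) := by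
      constructor
      · rw [disjoint_iff]
        have h1 : S ⊓ (U ⊔ N) ≤ N := by
          have h2 : S ⊓ (U ⊔ N) ≤ (N ⊔ U) ⊓ (N ⊔ S) := by
            apply le_inf
            · exact inf_le_right.trans (sup_comm U N).le
            · exact inf_le_left.trans (le_sup_right)
          have h3 : (N ⊔ U) ⊓ (N ⊔ S) = N ⊔ (U ⊓ (N ⊔ S)) :=
            sup_inf_assoc_of_le U le_sup_left
          have h4 : U ⊓ (N ⊔ S) = ⊥ := by
            have := disjoint_iff.mp hU.disjoint.symm
            rwa [sup_comm N S]
          rw [h3, h4, sup_bot_eq] at h2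
          exact h2
        have h5 : S ⊓ (U ⊔ N) ≤ S ⊓ N := le_inf inf_le_left h1
        have h6 : S ⊓ N ≤ N' ⊓ N := inf_le_inf_right N hSN'
        have h7 : N' ⊓ N = ⊥ := by
          rw [inf_comm]; exact disjoint_iff.mp hNN'.disjoint
        exact le_bot_iff.mp ((h5.trans h6).trans h7.le)
      · rw [codisjoint_iff, sup_comm U N, ← sup_assoc]
        exact codisjoint_iff.mp hU.codisjoint
    -- the projection
    set π : (∀ p : κ, Vf p) →ₗ[A] V m :=
      e.toLinearMap ∘ₗ (S.linearProjOfIsCompl (U ⊔ N) hST) with hπ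
    have hπN : ∀ x ∈ N, π x = 0 := by
      intro x hx
      have hxT : x ∈ U ⊔ N := Submodule.mem_sup_right hx
      have : S.linearProjOfIsCompl (U ⊔ N) hST x = 0 :=
        Submodule.linearProjOfIsCompl_apply_right hST ⟨x, hxT⟩
      simp [hπ, this]
    have hπne : π ≠ 0 := by
      obtain ⟨s, hs⟩ := exists_ne (0 : S)
      intro h
      apply hs
      have h1 : π s.val = e s := by
        simp [hπ]; exact Submodule.projectionOnto_apply_left hST s
      rw [h, LinearMap.zero_apply] at h1
      exact e.injective (by rw [← h1, map_zero])
    -- components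
    set comp : ∀ p : κ, (Vf p →ₗ[A] V m) := fun p => π ∘ₗ LinearMap.single A Vf p
      with hcomp
    have hdecomp : ∀ w : ∀ p : κ, Vf p, π w = ∑ p : κ, comp p (w p) := by
      intro w
      conv_lhs => rw [← Finset.univ_sum_single w, map_sum]
      refine Finset.sum_congr rfl fun p _ => ?_
      simp [hcomp]
    -- components off m vanish
    have h1 : ∀ p : κ, p.1 ≠ m → comp p = 0 := by
      intro p hp
      by_contra h
      exact (hnoniso p.1 m hp).false
        (LinearEquiv.ofBijective _ (LinearMap.bijective_of_ne_zero h))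
    -- components at m are scalars
    have h2 : ∀ l : Fin (d m), ∃ c : ℂ, ∀ v : V m, comp ⟨m, l⟩ v = c • v := fun l =>
      schur_scalar (comp ⟨m, l⟩)
    choose c hc using h2
    -- evaluate on μ 1
    have hμ1 : π (μ 1) = 0 := hπN _ ⟨1, rfl⟩
    have hμ1' : (0 : V m) = ∑ l : Fin (d m), c l • b m l := by
      rw [← hμ1, hdecomp]
      rw [← Finset.univ_sigma_univ, Finset.sum_sigma]
      have : ∀ i : Fin n, ∑ l : Fin (d i), comp ⟨i, l⟩ (μ 1 ⟨i, l⟩) =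
          if i = m then ∑ l : Fin (d m), c l • b m l else 0 := by
        intro i
        by_cases him : i = m
        · subst him
          rw [if_pos rfl]
          refine Finset.sum_congr rfl fun l _ => ?_
          have hone : μ 1 ⟨m, l⟩ = b m l := one_smul A (B ⟨m, l⟩)
          rw [hone, hc l (b m l)]
        · rw [if_neg him]
          refine Finset.sum_eq_zero fun l _ => ?_
          rw [h1 ⟨i, l⟩ him, LinearMap.zero_apply]
      rw [Finset.sum_congr rfl fun i _ => this i, Finset.sum_ite_eq' Finset.univ m _]
      simp
    -- basis independence gives c = 0
    have hc0 : ∀ l, c l = 0 := by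
      have hli := Fintype.linearIndependent_iff.mp (b m).linearIndependent
      exact hli c hμ1'.symm
    -- π = 0
    apply hπne
    refine LinearMap.ext fun w => ?_
    rw [hdecomp, LinearMap.zero_apply]
    rw [← Finset.univ_sigma_univ, Finset.sum_sigma]
    refine Finset.sum_eq_zero fun i _ => Finset.sum_eq_zero fun l _ => ?_
    by_cases him : i = m
    · subst him
      rw [hc l, hc0 l, zero_smul]
    · rw [h1 ⟨i, l⟩ him, LinearMap.zero_apply]
  -- use surjectivity
  obtain ⟨a, ha⟩ := hsurj (fun p => if p.1 = j then B p else 0)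
  have ha' : ∀ p : κ, a • B p = if p.1 = j then B p else 0 := fun p => congrFun ha p
  refine ⟨a, ?_, ?_⟩
  · have : DistribMulAction.toLinearMap ℂ (V j) a = LinearMap.id := by
      refine Module.Basis.ext (b j) fun l => ?_
      have := ha' ⟨j, l⟩
      simp at this; exact this
    rw [this, LinearMap.trace_id]
  · intro i hij
    have : DistribMulAction.toLinearMap ℂ (V i) a = 0 := by
      refine Module.Basis.ext (b i) fun l => ?_
      have := ha' ⟨i, l⟩
      simp [hij] at this; exact this
    rw [this, map_zero]
end

/-- Characters (traces) of pairwise nonisomorphic irreducible finite-dimensional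
representations of an associative `ℂ`-algebra `A` induce linearly independent
linear functionals on `A/[A,A]`. -/
theorem stmt_0 (A : Type*) [Ring A] [Algebra ℂ A] (n : ℕ)
    (V : Fin n → Type*) [∀ i, AddCommGroup (V i)] [∀ i, Module ℂ (V i)]
    [∀ i, Module A (V i)] [∀ i, IsScalarTower ℂ A (V i)]
    [∀ i, SMulCommClass A ℂ (V i)]
    [∀ i, FiniteDimensional ℂ (V i)]
    (hsimple : ∀ i, IsSimpleModule A (V i))
    (hnoniso : ∀ i j, i ≠ j → IsEmpty (V i ≃ₗ[A] V j))
    (C : Submodule ℂ A)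
    (hC : C = Submodule.span ℂ {x : A | ∃ a b : A, x = a * b - b * a})
    (φ : Fin n → (A ⧸ C) →ₗ[ℂ] ℂ)
    (hφ : ∀ i (a : A), φ i (Submodule.Quotient.mk a) =
      LinearMap.trace ℂ (V i) (DistribMulAction.toLinearMap ℂ (V i) a)) :
    LinearIndependent ℂ φ := by
  classical
  rw [Fintype.linearIndependent_iff]
  intro c hc j
  obtain ⟨a, haj, hai⟩ := exists_trace_element V hsimple hnoniso j
  have h := LinearMap.congr_fun hc (Submodule.Quotient.mk a)
  rw [LinearMap.sum_apply, LinearMap.zero_apply] at h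
  have key : ∀ i, φ i (Submodule.Quotient.mk (p := C) a) =
      if i = j then (Module.finrank ℂ (V j) : ℂ) else 0 := by
    intro i
    by_cases hij : i = j
    · subst hij
      rw [if_pos rfl, hφ, haj]
    · rw [if_neg hij, hφ, hai i hij]
  simp only [LinearMap.smul_apply, smul_eq_mul, key, mul_ite, mul_zero,
    Finset.sum_ite_eq' Finset.univ j] at h
  rw [if_pos (Finset.mem_univ j)] at h
  haveI : Nontrivial (V j) := IsSimpleModule.nontrivial A (V j)
  have hdj : (Module.finrank ℂ (V j) : ℂ) ≠ 0 :=
    Nat.cast_ne_zero.mpr (Module.finrank_pos (R := ℂ) (M := V j)).ne'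
  exact (mul_eq_zero.mp h).resolve_right hdj
end

section
/- If A is an associative ℂ-algebra with dim(A/[A,A]) = n finite, then A has at most n isomorphism classes of irreducible finite-dimensional representations. -/
set_option linter.unusedSectionVars false

open LinearMap Module

section Key

variable {A : Type*} [Ring A] {m : ℕ} {V : Fin m → Type*}
  [∀ i, AddCommGroup (V i)] [∀ i, Module ℂ (V i)]
  [∀ i, Module A (V i)]
  [∀ i, SMulCommClass A ℂ (V i)]
  [∀ i, FiniteDimensional ℂ (V i)]

/-- Off-diagonal components of an `A`-endomorphism of `∀ i, V i` vanish. -/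
lemma zero_off (hsimple : ∀ i, IsSimpleModule A (V i))
    (hnoniso : ∀ i j, i ≠ j → IsEmpty (V i ≃ₗ[A] V j))
    (g : (∀ i, V i) →ₗ[A] ∀ i, V i) {j k : Fin m} (hjk : j ≠ k) (w : V j) :
    g (Pi.single j w) k = 0 := by
  haveI := hsimple j; haveI := hsimple k
  have h : (LinearMap.proj k ∘ₗ g ∘ₗ LinearMap.single A V j : V j →ₗ[A] V k) = 0 := by
    rcases (LinearMap.proj k ∘ₗ g ∘ₗ LinearMap.single A V j).bijective_or_eq_zero with hb | h
    · exact ((hnoniso j k hjk).false (LinearEquiv.ofBijective _ hb)).elim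
    · exact h
  exact congrArg (fun φ => φ w) h

/-- Any `A`-endomorphism of `∀ i, V i` commutes with the `ℂ`-linear projection onto the
`i`-th coordinate. -/
lemma comm_single (hsimple : ∀ i, IsSimpleModule A (V i))
    (hnoniso : ∀ i j, i ≠ j → IsEmpty (V i ≃ₗ[A] V j))
    (g : (∀ i, V i) →ₗ[A] ∀ i, V i) (i : Fin m) (v : ∀ i, V i) :
    g (Pi.single i (v i)) = Pi.single i (g v i) := by
  have hv : v = ∑ j, Pi.single j (v j) := (Finset.univ_sum_single v).symm
  have h1 : g v i = g (Pi.single i (v i)) i := by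
    conv_lhs => rw [hv]
    rw [map_sum]
    rw [Finset.sum_apply]
    rw [Finset.sum_eq_single i]
    · intro j _ hj
      exact zero_off hsimple hnoniso g hj (v j)
    · intro h; exact absurd (Finset.mem_univ i) h
  rw [h1]
  funext k
  by_cases hk : k = i
  · subst hk; rw [Pi.single_eq_same]
  · rw [Pi.single_eq_of_ne hk]
    exact zero_off hsimple hnoniso g (Ne.symm hk) (v i)

/-- The key density-type lemma: there is an element of `A` acting as the identity on `V i`
and as zero on all `V j`, `j ≠ i`. -/
lemma key (hsimple : ∀ i, IsSimpleModule A (V i))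
    (hnoniso : ∀ i j, i ≠ j → IsEmpty (V i ≃ₗ[A] V j)) (i : Fin m) :
    ∃ a : A, (∀ w : V i, a • w = w) ∧ ∀ j, j ≠ i → ∀ w : V j, a • w = 0 := by
  classical
  set M := ∀ i, V i with hM
  set r := finrank ℂ M with hr
  let b : Basis (Fin r) ℂ M := Module.finBasis ℂ M
  -- the coordinate-retention map
  let f : M →ₗ[ℂ] M := LinearMap.single ℂ V i ∘ₗ LinearMap.proj i
  -- semisimplicity of W := Fin r → M as an A-module
  let W := Fin r → M
  haveI : IsSemisimpleModule A W := by
    let p : Fin r × Fin m → Submodule A W := fun q =>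
      LinearMap.range ((LinearMap.single A (fun _ : Fin r => M) q.1) ∘ₗ (LinearMap.single A V q.2))
    apply isSemisimpleModule_of_isSemisimpleModule_submodule' (p := p)
    · intro q
      haveI : IsSimpleModule A (p q) := by
        haveI := hsimple q.2
        have hinj : Function.Injective
            ((LinearMap.single A (fun _ : Fin r => M) q.1) ∘ₗ (LinearMap.single A V q.2)) := by
          simp only [LinearMap.coe_comp, LinearMap.coe_single]
          exact Function.Injective.comp (Pi.single_injective q.1) (Pi.single_injective q.2)
        exact IsSimpleModule.congr
          (LinearEquiv.ofInjective _ hinj).symm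
      infer_instance
    · rw [eq_top_iff]
      intro x _
      have h1 : ∀ t, (Pi.single t (x t) : W) = ∑ j, Pi.single t (Pi.single j (x t j)) := by
        intro t
        conv_lhs => rw [← Finset.univ_sum_single (x t)]
        exact map_sum (LinearMap.single A (fun _ : Fin r => M) t) _ _
      have hx : x = ∑ t, ∑ j, Pi.single t (Pi.single j (x t j)) := by
        conv_lhs => rw [← Finset.univ_sum_single x]
        exact Finset.sum_congr rfl fun t _ => h1 t
      rw [hx]
      refine Submodule.sum_mem _ fun t _ => Submodule.sum_mem _ fun j _ => ?_
      refine Submodule.mem_iSup_of_mem (t, j) ?_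
      exact ⟨x t j, rfl⟩
  -- the A-submodule generated by the basis tuple
  let xb : W := fun t => b t
  let N : Submodule A W := LinearMap.range (LinearMap.toSpanSingleton A W xb)
  obtain ⟨Q, hQ⟩ := exists_isCompl N
  let P : W →ₗ[A] W := N.subtype ∘ₗ N.projectionOnto Q hQ
  have hPmem : ∀ x, P x ∈ N := fun x => (N.projectionOnto Q hQ x).2
  have hPx : P xb = xb := by
    have : xb ∈ N := ⟨1, one_smul _ _⟩
    simp only [P, LinearMap.comp_apply, Submodule.coe_subtype,
      Submodule.projectionOnto_apply_left hQ ⟨xb, this⟩]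
  -- F := componentwise f
  let F : W → W := fun x t => f (x t)
  -- P commutes with F
  have hcomm : ∀ x : W, P (F x) = F (P x) := by
    intro x
    funext t
    show P (F x) t = f (P x t)
    have hdec : ∀ y : W, P y t = ∑ s, (LinearMap.proj t ∘ₗ P ∘ₗ
        LinearMap.single A (fun _ : Fin r => M) s) (y s) := by
      intro y
      conv_lhs => rw [← Finset.univ_sum_single y]
      rw [map_sum, Finset.sum_apply]
      rfl
    rw [hdec (F x), hdec x]
    have : ∀ s, (LinearMap.proj t ∘ₗ P ∘ₗ LinearMap.single A (fun _ : Fin r => M) s)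
        (f (x s)) = f ((LinearMap.proj t ∘ₗ P ∘ₗ LinearMap.single A (fun _ : Fin r => M) s)
        (x s)) := by
      intro s
      have hfs : ∀ (g : M →ₗ[A] M) (v : M), g (f v) = f (g v) := by
        intro g v
        show g (Pi.single i (v i)) = Pi.single i (g v i)
        exact comm_single hsimple hnoniso g i v
      exact hfs _ (x s)
    rw [Finset.sum_congr rfl fun s _ => this s]
    show (∑ s, f _) = f _
    rw [← map_sum]
  -- conclude: F xb ∈ N
  have hFxb : F xb ∈ N := by
    rw [← hPx, ← hcomm]
    exact hPmem _
  obtain ⟨a, ha⟩ := hFxb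
  -- a acts as f on all of M
  have haf : ∀ v : M, a • v = f v := by
    -- both sides are ℂ-linear in v and agree on the basis b
    let ℓ : M →ₗ[ℂ] M :=
      { toFun := fun v => a • v
        map_add' := fun x y => smul_add a x y
        map_smul' := fun c x => by exact smul_comm a c x }
    have hbasis : ∀ t : Fin r, ℓ (b t) = f (b t) := by
      intro t
      have := congrArg (fun y => y t) ha
      simp [ℓ, xb, F, LinearMap.toSpanSingleton_apply] at this ⊢
      exact this
    have : ℓ = f := b.ext hbasis
    intro v
    exact congrArg (fun φ => φ v) (congrArg DFunLike.coe this)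
  refine ⟨a, ?_, ?_⟩
  · intro w
    have h := congrFun (haf (Pi.single i w)) i
    have hl : (a • (Pi.single i w : M)) i = a • w := by
      rw [Pi.smul_apply, Pi.single_eq_same]
    have hr : f (Pi.single i w) i = w := by
      show (Pi.single i ((Pi.single i w : M) i) : M) i = w
      rw [Pi.single_eq_same, Pi.single_eq_same]
    rw [hl, hr] at h
    exact h
  · intro j hj w
    have h := congrFun (haf (Pi.single j w)) j
    have hl : (a • (Pi.single j w : M)) j = a • w := by
      rw [Pi.smul_apply, Pi.single_eq_same]
    have hr : f (Pi.single j w) j = 0 := by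
      show (Pi.single i ((Pi.single j w : M) i) : M) j = 0
      rw [Pi.single_eq_of_ne (Ne.symm hj), Pi.single_zero]
      rfl
    rw [hl, hr] at h
    exact h

end Key

/-- If `dim (A/[A,A]) = n` is finite, then `A` has at most `n` isomorphism classes of
irreducible finite-dimensional representations: any family of pairwise nonisomorphic
irreducible finite-dimensional `A`-modules has at most `n` members. -/
theorem stmt_1 (A : Type*) [Ring A] [Algebra ℂ A]
    (C : Submodule ℂ A)
    (hC : C = Submodule.span ℂ {x : A | ∃ a b : A, x = a * b - b * a})
    (n : ℕ) [FiniteDimensional ℂ (A ⧸ C)] (hn : Module.finrank ℂ (A ⧸ C) = n)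
    (m : ℕ) (V : Fin m → Type*) [∀ i, AddCommGroup (V i)] [∀ i, Module ℂ (V i)]
    [∀ i, Module A (V i)] [∀ i, IsScalarTower ℂ A (V i)]
    [∀ i, SMulCommClass A ℂ (V i)]
    [∀ i, FiniteDimensional ℂ (V i)]
    (hsimple : ∀ i, IsSimpleModule A (V i))
    (hnoniso : ∀ i j, i ≠ j → IsEmpty (V i ≃ₗ[A] V j)) :
    m ≤ n := by
  classical
  -- the action of `A` on `V j` as `ℂ`-linear endomorphisms
  let ρ : ∀ j : Fin m, A →ₗ[ℂ] Module.End ℂ (V j) := fun j =>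
    { toFun := fun a =>
        { toFun := fun v => a • v
          map_add' := fun x y => smul_add a x y
          map_smul' := fun c x => by exact smul_comm a c x }
      map_add' := fun x y => by ext v; exact add_smul x y v
      map_smul' := fun c x => by ext v; exact smul_assoc c x v }
  -- the characters
  let χ : ∀ _ : Fin m, A →ₗ[ℂ] ℂ := fun j => LinearMap.trace ℂ (V j) ∘ₗ ρ j
  have hker : ∀ j, C ≤ LinearMap.ker (χ j) := by
    intro j
    rw [hC, Submodule.span_le]
    rintro x ⟨a, b, rfl⟩
    have hmul : ∀ x y : A, ρ j (x * y) = ρ j x * ρ j y := by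
      intro x y; ext v; exact mul_smul x y v
    simp only [SetLike.mem_coe, LinearMap.mem_ker, χ, LinearMap.comp_apply, map_sub,
      hmul]
    rw [LinearMap.trace_mul_comm, sub_self]
  let χq : ∀ _ : Fin m, (A ⧸ C) →ₗ[ℂ] ℂ := fun j => C.liftQ (χ j) (hker j)
  let Φ : (A ⧸ C) →ₗ[ℂ] (Fin m → ℂ) := LinearMap.pi χq
  have hsurj : Function.Surjective Φ := by
    -- it suffices that each `Pi.single i 1` is in the range
    have hrange : ∀ i : Fin m, (Pi.single i 1 : Fin m → ℂ) ∈ LinearMap.range Φ := by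
      intro i
      obtain ⟨a, ha1, ha0⟩ := key hsimple hnoniso i
      have hd : ((finrank ℂ (V i) : ℂ)) ≠ 0 := by
        haveI := (hsimple i).nontrivial
        exact Nat.cast_ne_zero.mpr (finrank_pos (R := ℂ) (M := V i)).ne'
      have hΦa : Φ (Submodule.Quotient.mk a) = (finrank ℂ (V i) : ℂ) • (Pi.single i 1 : Fin m → ℂ) := by
        funext j
        simp only [Φ, LinearMap.pi_apply, χq, Submodule.liftQ_apply]
        by_cases hj : j = i
        · subst hj
          have : ρ j a = LinearMap.id := by ext v; exact ha1 v
          simp [χ, this, LinearMap.trace_id, Pi.single_eq_same]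
        · have : ρ j a = 0 := by ext v; exact ha0 j hj v
          simp [χ, this, Pi.single_eq_of_ne hj]
      have : Pi.single i 1 = ((finrank ℂ (V i) : ℂ))⁻¹ • Φ (Submodule.Quotient.mk a) := by
        rw [hΦa, smul_smul, inv_mul_cancel₀ hd, one_smul]
      rw [this]
      exact Submodule.smul_mem _ _ ⟨_, rfl⟩
    intro c
    have : c = ∑ i, c i • (Pi.single i 1 : Fin m → ℂ) := by
      funext j
      rw [Finset.sum_apply, Finset.sum_eq_single j]
      · simp
      · intro k _ hk; simp [Pi.single_eq_of_ne (Ne.symm hk)]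
      · intro h; exact absurd (Finset.mem_univ j) h
    have hmem : c ∈ LinearMap.range Φ := by
      rw [this]
      exact Submodule.sum_mem _ fun i _ => Submodule.smul_mem _ _ (hrange i)
    exact hmem
  have := LinearMap.finrank_range_le Φ
  rw [LinearMap.range_eq_top.mpr hsurj, finrank_top] at this
  simpa [hn] using this
end

section
/- Let A be an associative ℂ-algebra that is a finitely generated module over a central subalgebra Z isomorphic to a polynomial ring. Suppose that for a Zariski-dense set of characters η: Z → ℂ the quotient A/(ker η)A has dimension of HH₀ equal to d, and for all characters the dimension of HH₀(A/(ker η)A) is at most d. Then dim HH₀(A/(ker η)A) = d for every character η: Z → ℂ. -/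
open Matrix in
/-- Vectors restricting to a square matrix with nonzero det are independent. -/
private lemma stmt15_dep {K : Type*} [Field K] {t : ℕ} {ι : Type*} [Fintype ι]
    (u : Fin t → ι → K) (τ : Fin t → ι)
    (h : (Matrix.of fun j j' => u j (τ j')).det ≠ 0) : LinearIndependent K u := by
  have hu : IsUnit (Matrix.of fun j j' => u j (τ j')) :=
    (Matrix.isUnit_iff_isUnit_det _).mpr (isUnit_iff_ne_zero.mpr h)
  have hrows := Matrix.linearIndependent_rows_iff_isUnit.mpr hu
  have : (fun j => (Matrix.of fun j j' => u j (τ j')) j)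
      = (LinearMap.funLeft K K τ) ∘ u := by
    ext j j'; simp [LinearMap.funLeft]
  change LinearIndependent K (fun j => (Matrix.of fun j j' => u j (τ j')) j) at hrows
  rw [this] at hrows
  exact LinearIndependent.of_comp _ hrows

open Matrix in
/-- Independent vectors in `ι → K` admit a square submatrix with nonzero det. -/
private lemma stmt15_minor {K : Type*} [Field K] {t : ℕ} {ι : Type*} [Fintype ι]
    (w : Fin t → ι → K) (hw : LinearIndependent K w) :
    ∃ τ : Fin t → ι, (Matrix.of fun j j' => w j (τ j')).det ≠ 0 := by
  classical
  set W : Matrix (Fin t) ι K := Matrix.of w with hW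
  have hr : W.rank = t := by
    have := hw.rank_matrix (M := W)
    simpa using this
  have hspan : Submodule.span K (Set.range Wᵀ) = ⊤ := by
    apply Submodule.eq_top_of_finrank_eq
    rw [show Set.range Wᵀ = Set.range W.col from rfl, ← Matrix.rank_eq_finrank_span_cols, hr, Module.finrank_fintype_fun_eq_card,
      Fintype.card_fin]
  obtain ⟨b, hbsub, hbspan, hbli⟩ := exists_linearIndependent K (Set.range Wᵀ)
  haveI : Fintype b := ((Set.finite_range Wᵀ).subset hbsub).fintype
  have hbtop : ⊤ ≤ Submodule.span K (Set.range ((↑) : b → (Fin t → K))) := by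
    rw [Subtype.range_coe, hbspan, hspan]
  let B : Module.Basis b K (Fin t → K) := Module.Basis.mk hbli hbtop
  have hcard : Fintype.card b = t := by
    have := Module.finrank_eq_card_basis B
    rw [Module.finrank_fintype_fun_eq_card, Fintype.card_fin] at this
    omega
  let e : Fin t ≃ b := (Fintype.equivFinOfCardEq hcard).symm
  choose τ hτ using fun j => hbsub (e j).2
  refine ⟨τ, ?_⟩
  have hcols : LinearIndependent K (fun j' => Wᵀ (τ j')) := by
    have : (fun j' => Wᵀ (τ j')) = (↑) ∘ e := by
      ext j' i; rw [hτ j']; rfl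
    rw [this]
    exact hbli.comp e e.injective
  have : LinearIndependent K (fun j' => (Matrix.of fun j j' => w j (τ j'))ᵀ j') := by
    convert hcols using 2
    rfl
  have hu : IsUnit (Matrix.of fun j j' => w j (τ j')) :=
    Matrix.linearIndependent_cols_iff_isUnit.mp this
  intro hdet
  exact ((Matrix.isUnit_iff_isUnit_det _).mp hu).ne_zero hdet

/-- Let `A` be an associative `ℂ`-algebra, finitely generated as a module over a
central polynomial subalgebra (the image of `ζ`). For a character given by a point
`v`, let `N v = (ker η_v)·A + [A,A]`, so `HH₀(A/(ker η_v)A) = A ⧸ N v`. If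
`dim (A ⧸ N v) = d` on a Zariski-dense set of `v`, and `dim (A ⧸ N v) ≤ d` for all
`v`, then `dim (A ⧸ N v) = d` for every `v`. -/
theorem stmt_15 (A : Type*) [Ring A] [Algebra ℂ A] (k : ℕ)
    (ζ : MvPolynomial (Fin k) ℂ →ₐ[ℂ] A)
    (hinj : Function.Injective ζ)
    (hcentral : ∀ (p : MvPolynomial (Fin k) ℂ) (a : A), ζ p * a = a * ζ p)
    (hfg : ∃ s : Finset A, ∀ a : A,
      a ∈ Submodule.span ℂ {x : A | ∃ (p : MvPolynomial (Fin k) ℂ) (b : A),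
        b ∈ s ∧ x = ζ p * b})
    (C : Submodule ℂ A)
    (hC : C = Submodule.span ℂ {x : A | ∃ a b : A, x = a * b - b * a})
    (N : (Fin k → ℂ) → Submodule ℂ A)
    (hN : ∀ v : Fin k → ℂ, N v = Submodule.span ℂ
      {x : A | ∃ (p : MvPolynomial (Fin k) ℂ) (a : A),
        MvPolynomial.eval v p = 0 ∧ x = ζ p * a} ⊔ C)
    (d : ℕ)
    (S : Set (Fin k → ℂ))
    (hdense : ∀ p : MvPolynomial (Fin k) ℂ,
      (∀ v ∈ S, MvPolynomial.eval v p = 0) → p = 0)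
    (hgeneric : ∀ v ∈ S, Module.finrank ℂ (A ⧸ N v) = d)
    (hbound : ∀ v : Fin k → ℂ, Module.finrank ℂ (A ⧸ N v) ≤ d) :
    ∀ v : Fin k → ℂ, Module.finrank ℂ (A ⧸ N v) = d := by
  classical
  obtain ⟨s, hs⟩ := hfg
  -- the "presentation" map from polynomial vectors to A
  let ψ : ((↥s) → MvPolynomial (Fin k) ℂ) →ₗ[ℂ] A :=
    { toFun := fun g => ∑ i : ↥s, ζ (g i) * (i : A)
      map_add' := by
        intro g h
        simp [map_add, add_mul, Finset.sum_add_distrib]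
      map_smul' := by
        intro c g
        simp [Pi.smul_apply, map_smul, smul_mul_assoc, Finset.smul_sum] }
  have hψ : ∀ g, ψ g = ∑ i : ↥s, ζ (g i) * (i : A) := fun _ => rfl
  -- the map from coefficient vectors to A
  let ψ₀ : ((↥s) → ℂ) →ₗ[ℂ] A :=
    { toFun := fun c => ∑ i : ↥s, c i • (i : A)
      map_add' := by
        intro c c'
        simp [add_smul, Finset.sum_add_distrib]
      map_smul' := by
        intro c g
        simp [smul_smul, Finset.smul_sum] }
  have hψ₀ : ∀ c, ψ₀ c = ∑ i : ↥s, c i • (i : A) := fun _ => rfl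
  -- evaluation of polynomial vectors
  let ev : (Fin k → ℂ) → (((↥s) → MvPolynomial (Fin k) ℂ) →ₗ[ℂ] ((↥s) → ℂ)) := fun v =>
    { toFun := fun g i => MvPolynomial.eval v (g i)
      map_add' := by intro g h; funext i; simp
      map_smul' := by
        intro c g; funext i
        exact MvPolynomial.smul_eval _ _ _ }
  have hev : ∀ v g i, ev v g i = MvPolynomial.eval v (g i) := fun _ _ _ => rfl
  -- every element of A is ψ of a polynomial vector
  have hrep : ∀ a : A, ∃ g : (↥s) → MvPolynomial (Fin k) ℂ, ψ g = a := by
    intro a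
    have h1 : Submodule.span ℂ {x : A | ∃ (p : MvPolynomial (Fin k) ℂ) (b : A),
        b ∈ s ∧ x = ζ p * b} ≤ LinearMap.range ψ := by
      rw [Submodule.span_le]
      rintro x ⟨p, b, hb, rfl⟩
      refine ⟨fun i => if i = (⟨b, hb⟩ : ↥s) then p else 0, ?_⟩
      rw [hψ]
      have h2 : ∀ i : ↥s, ζ (if i = (⟨b, hb⟩ : ↥s) then p else 0) * (i : A)
          = if i = (⟨b, hb⟩ : ↥s) then ζ p * b else 0 := by
        intro i
        by_cases h : i = (⟨b, hb⟩ : ↥s)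
        · subst h; simp
        · simp [h]
      rw [Finset.sum_congr rfl fun i _ => h2 i]
      simp
    obtain ⟨g, hg⟩ := h1 (hs a)
    exact ⟨g, hg⟩
  -- characterization of N v
  have hkey : ∀ v : Fin k → ℂ,
      N v = Submodule.map ψ (LinearMap.ker (ev v)) ⊔ C := by
    intro v
    rw [hN v]
    congr 1
    apply le_antisymm
    · rw [Submodule.span_le]
      rintro x ⟨p, a, hpv, rfl⟩
      obtain ⟨g, rfl⟩ := hrep a
      refine ⟨fun i => p * g i, ?_, ?_⟩
      · rw [SetLike.mem_coe, LinearMap.mem_ker]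
        funext i
        rw [hev]
        simp [hpv]
      · rw [hψ, hψ, Finset.mul_sum]
        refine Finset.sum_congr rfl fun i _ => ?_
        rw [map_mul, mul_assoc]
    · rintro x ⟨g, hg, rfl⟩
      simp only [SetLike.mem_coe, LinearMap.mem_ker] at hg
      have hg' : ∀ i, MvPolynomial.eval v (g i) = 0 := by
        intro i
        rw [← hev v]
        rw [hg]
        rfl
      rw [hψ]
      refine Submodule.sum_mem _ fun i _ => Submodule.subset_span ?_
      exact ⟨g i, (i : A), hg' i, rfl⟩
  -- constant vectors
  have hconst : ∀ c : (↥s) → ℂ, ψ (fun i => MvPolynomial.C (c i)) = ψ₀ c := by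
    intro c
    rw [hψ, hψ₀]
    refine Finset.sum_congr rfl fun i _ => ?_
    show ζ (MvPolynomial.C (c i)) * (i : A) = c i • (i : A)
    rw [show (MvPolynomial.C (c i) : MvPolynomial (Fin k) ℂ)
        = algebraMap ℂ (MvPolynomial (Fin k) ℂ) (c i) from rfl,
      AlgHom.commutes, ← Algebra.smul_def]
  have hevC : ∀ (v : Fin k → ℂ) (c : (↥s) → ℂ),
      ev v (fun i => MvPolynomial.C (c i)) = c := by
    intro v c
    funext i
    rw [hev]
    exact MvPolynomial.eval_C _
  -- kernel characterization
  have hker : ∀ (v : Fin k → ℂ) (c : (↥s) → ℂ),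
      ψ₀ c ∈ N v ↔ ∃ g : (↥s) → MvPolynomial (Fin k) ℂ, ψ g ∈ C ∧ ev v g = c := by
    intro v c
    rw [hkey v]
    constructor
    · intro h
      obtain ⟨y, hy, z, hz, hyz⟩ := Submodule.mem_sup.mp h
      obtain ⟨h0, hh0, rfl⟩ := hy
      simp only [SetLike.mem_coe, LinearMap.mem_ker] at hh0
      refine ⟨(fun i => MvPolynomial.C (c i)) - h0, ?_, ?_⟩
      · rw [map_sub, hconst]
        have : ψ₀ c - ψ h0 = z := by rw [← hyz]; abel
        rw [this]; exact hz
      · rw [map_sub, hh0, sub_zero, hevC]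
    · rintro ⟨g, hgC, hgc⟩
      rw [Submodule.mem_sup]
      refine ⟨ψ ((fun i => MvPolynomial.C (c i)) - g), ⟨_, ?_, rfl⟩, ψ g, hgC, ?_⟩
      · simp only [SetLike.mem_coe, LinearMap.mem_ker]
        rw [map_sub, hevC, hgc, sub_self]
      · rw [← map_add, sub_add_cancel, hconst]
  -- the projection maps and their surjectivity
  let φ : (v : Fin k → ℂ) → (((↥s) → ℂ) →ₗ[ℂ] (A ⧸ N v)) :=
    fun v => (N v).mkQ.comp ψ₀
  have hφ : ∀ v c, φ v c = Submodule.Quotient.mk (ψ₀ c) := fun _ _ => rfl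
  have hsurj : ∀ v, Function.Surjective (φ v) := by
    intro v x
    obtain ⟨a, rfl⟩ := Submodule.Quotient.mk_surjective (N v) x
    obtain ⟨g, rfl⟩ := hrep a
    refine ⟨ev v g, ?_⟩
    rw [hφ, Submodule.Quotient.eq]
    have : ψ₀ (ev v g) = ψ (fun i => MvPolynomial.C (ev v g i)) := (hconst _).symm
    rw [this, ← map_sub]
    have hmem : (fun i => MvPolynomial.C (ev v g i)) - g ∈ LinearMap.ker (ev v) := by
      rw [LinearMap.mem_ker, map_sub, hevC, sub_eq_zero]
    rw [hkey v]
    exact Submodule.mem_sup_left ⟨_, hmem, rfl⟩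
  have hkerφ : ∀ (v : Fin k → ℂ) (c : (↥s) → ℂ), c ∈ LinearMap.ker (φ v) ↔ ψ₀ c ∈ N v := by
    intro v c
    rw [LinearMap.mem_ker, hφ, Submodule.Quotient.mk_eq_zero]
  -- finite dimensionality and rank-nullity
  have hfd : ∀ v : Fin k → ℂ, FiniteDimensional ℂ (A ⧸ N v) :=
    fun v => Module.Finite.of_surjective (φ v) (hsurj v)
  have hrank : ∀ v : Fin k → ℂ,
      Module.finrank ℂ (A ⧸ N v) + Module.finrank ℂ (LinearMap.ker (φ v)) = s.card := by
    intro v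
    haveI := hfd v
    have h1 := LinearMap.finrank_range_add_finrank_ker (φ v)
    rw [LinearMap.range_eq_top.mpr (hsurj v), finrank_top,
      Module.finrank_fintype_fun_eq_card, Fintype.card_coe] at h1
    exact h1
  -- S is nonempty
  have hSne : S.Nonempty := by
    by_contra h
    rw [Set.not_nonempty_iff_eq_empty] at h
    have := hdense 1 (by simp [h])
    exact one_ne_zero this
  obtain ⟨v₀, hv₀⟩ := hSne
  have hdm : d ≤ s.card := by
    have := hrank v₀
    rw [hgeneric v₀ hv₀] at this
    omega
  -- main argument
  intro v₁
  by_contra hne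
  have hd1 : Module.finrank ℂ (A ⧸ N v₁) < d := lt_of_le_of_ne (hbound v₁) hne
  set t : ℕ := s.card - d + 1 with ht
  have hKt : t ≤ Module.finrank ℂ (LinearMap.ker (φ v₁)) := by
    have := hrank v₁
    omega
  -- t independent vectors in the kernel at v₁
  let Bk := Module.finBasis ℂ (LinearMap.ker (φ v₁))
  let w : Fin t → ((↥s) → ℂ) := fun j => ((Bk (Fin.castLE hKt j)) : (↥s) → ℂ)
  have hwli : LinearIndependent ℂ w := by
    have h1 : LinearIndependent ℂ (fun j : Fin t => Bk (Fin.castLE hKt j)) :=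
      Bk.linearIndependent.comp _ (Fin.castLE_injective hKt)
    exact h1.map' (LinearMap.ker (φ v₁)).subtype (Submodule.ker_subtype _)
  have hwker : ∀ j, ψ₀ (w j) ∈ N v₁ := by
    intro j
    exact (hkerφ v₁ (w j)).mp (Bk (Fin.castLE hKt j)).2
  -- polynomial lifts
  have hlif : ∀ j, ∃ g : (↥s) → MvPolynomial (Fin k) ℂ, ψ g ∈ C ∧ ev v₁ g = w j :=
    fun j => (hker v₁ (w j)).mp (hwker j)
  choose G hGC hGev using hlif
  -- the minor
  obtain ⟨τ, hτ⟩ := stmt15_minor w hwli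
  set Δ : MvPolynomial (Fin k) ℂ := (Matrix.of fun j j' => G j (τ j')).det with hΔ
  -- evaluation of the minor
  have hevΔ : ∀ v : Fin k → ℂ,
      MvPolynomial.eval v Δ = (Matrix.of fun j j' => MvPolynomial.eval v (G j (τ j'))).det := by
    intro v
    rw [hΔ, RingHom.map_det]
    rfl
  -- the minor vanishes on S
  have hvan : ∀ v ∈ S, MvPolynomial.eval v Δ = 0 := by
    intro v hv
    by_contra hΔv
    rw [hevΔ] at hΔv
    have hu : LinearIndependent ℂ (fun j => ev v (G j)) := by
      apply stmt15_dep _ τ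
      convert hΔv using 2
      all_goals rfl
    -- these independent vectors live in the kernel at v
    have humem : ∀ j, ev v (G j) ∈ LinearMap.ker (φ v) := by
      intro j
      rw [hkerφ]
      exact (hker v _).mpr ⟨G j, hGC j, rfl⟩
    let u' : Fin t → ↥(LinearMap.ker (φ v)) := fun j => ⟨ev v (G j), humem j⟩
    have hu' : LinearIndependent ℂ u' :=
      LinearIndependent.of_comp (LinearMap.ker (φ v)).subtype hu
    haveI : FiniteDimensional ℂ ((↥s) → ℂ) := inferInstance
    have hcard := hu'.fintype_card_le_finrank
    rw [Fintype.card_fin] at hcard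
    have h2 := hrank v
    rw [hgeneric v hv] at h2
    omega
  have hΔ0 : Δ = 0 := hdense Δ hvan
  have : MvPolynomial.eval v₁ Δ ≠ 0 := by
    rw [hevΔ]
    have : (Matrix.of fun j j' => MvPolynomial.eval v₁ (G j (τ j')))
        = (Matrix.of fun j j' => w j (τ j')) := by
      ext j j'
      show MvPolynomial.eval v₁ (G j (τ j')) = w j (τ j')
      rw [← hev v₁, hGev j]
    rw [this]
    exact hτ
  rw [hΔ0] at this
  simp at this
end
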